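/- Let (X,d) be a metric space, θ=(k_r) a lacunary sequence, f any unbounded modulus function, (A_k) a sequence in CL(X) and A ∈ CL(X). If (A_k) is Wijsman θ-lacunary f-strong Cesàro convergent to A, then (A_k) is Wijsman θ-lacunary strong Cesàro convergent to A. -/
import Mathlib


open Filter Metric Set

/-- `f : ℝ → ℝ` is an (unbounded) modulus function (considered on `[0,∞)`):
`f x = 0 ↔ x = 0`, subadditive, increasing, continuous from the right at `0`,
and unbounded. -/
def IsModulus (f : ℝ → ℝ) : Prop :=
  (∀ x ∈ Set.Ici (0:ℝ), 0 ≤ f x) ∧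
  (∀ x ∈ Set.Ici (0:ℝ), (f x = 0 ↔ x = 0)) ∧
  (∀ x ∈ Set.Ici (0:ℝ), ∀ y ∈ Set.Ici (0:ℝ), f (x + y) ≤ f x + f y) ∧
  MonotoneOn f (Set.Ici (0:ℝ)) ∧
  ContinuousWithinAt f (Set.Ici (0:ℝ)) 0 ∧
  (∀ M : ℝ, ∃ x ∈ Set.Ici (0:ℝ), M < f x)

/-- `φ(ε) = limsup_n f(nε)/f(n)`. -/
noncomputable def modPhi (f : ℝ → ℝ) (ε : ℝ) : ℝ :=
  Filter.limsup (fun n : ℕ => f ((n : ℝ) * ε) / f (n : ℝ)) Filter.atTop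

/-- A modulus function is compatible if `φ(ε) → 0` as `ε → 0⁺`. -/
def Compatible (f : ℝ → ℝ) : Prop :=
  Filter.Tendsto (modPhi f) (nhdsWithin 0 (Set.Ioi 0)) (nhds 0)

/-- Wijsman statistical convergence of a sequence of subsets of a metric space. -/
def WijsmanStatConv {X : Type*} [MetricSpace X] (A : ℕ → Set X) (B : Set X) : Prop :=
  ∀ x : X, ∀ ε > (0:ℝ),
    Filter.Tendsto (fun n : ℕ =>
      (((Finset.range n).filter
        (fun j => ε < |infDist x (A j) - infDist x B|)).card : ℝ) / (n : ℝ))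
      Filter.atTop (nhds 0)

/-- Wijsman `f`-statistical convergence of a sequence of subsets of a metric space. -/
def WijsmanFStatConv {X : Type*} [MetricSpace X] (f : ℝ → ℝ) (A : ℕ → Set X)
    (B : Set X) : Prop :=
  ∀ x : X, ∀ ε > (0:ℝ),
    Filter.Tendsto (fun n : ℕ =>
      f ((((Finset.range n).filter
        (fun j => ε < |infDist x (A j) - infDist x B|)).card : ℝ)) / f (n : ℝ))
      Filter.atTop (nhds 0)

/-- A real sequence is `f`-strong Cesàro convergent to `L`. -/
def FStrongCesaro (f : ℝ → ℝ) (x : ℕ → ℝ) (L : ℝ) : Prop :=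
  Filter.Tendsto (fun n : ℕ =>
    f (∑ j ∈ Finset.range n, |x j - L|) / f (n : ℝ)) Filter.atTop (nhds 0)

/-- Wijsman `f`-strong Cesàro convergence. -/
def WijsmanFStrongCesaro {X : Type*} [MetricSpace X] (f : ℝ → ℝ) (A : ℕ → Set X)
    (B : Set X) : Prop :=
  ∀ x : X, FStrongCesaro f (fun j => infDist x (A j)) (infDist x B)

/-- Wijsman strong Cesàro convergence (the case `f = id`). -/
def WijsmanStrongCesaro {X : Type*} [MetricSpace X] (A : ℕ → Set X) (B : Set X) : Prop :=
  ∀ x : X,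
    Filter.Tendsto (fun n : ℕ =>
      (∑ j ∈ Finset.range n, |infDist x (A j) - infDist x B|) / (n : ℝ))
      Filter.atTop (nhds 0)

/-- A real sequence is uniformly integrable. -/
def UnifIntegrable (x : ℕ → ℝ) : Prop :=
  Filter.Tendsto (fun c : ℝ =>
    ⨆ n : ℕ, (∑ j ∈ Finset.range n, if c ≤ |x j| then |x j| else 0) / (n : ℝ))
    Filter.atTop (nhds 0)

/-- Wijsman uniform integrability. -/
def WijsmanUnifIntegrable {X : Type*} [MetricSpace X] (A : ℕ → Set X) : Prop :=
  ∀ x : X, UnifIntegrable (fun j => infDist x (A j))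

/-- A lacunary sequence: strictly increasing, starting at `0`,
with gaps `h_r = k_{r+1} - k_r → ∞`. -/
def IsLacunary (k : ℕ → ℕ) : Prop :=
  k 0 = 0 ∧ StrictMono k ∧
    Filter.Tendsto (fun r : ℕ => k (r + 1) - k r) Filter.atTop Filter.atTop

/-- The gaps `h_r` of a lacunary sequence. -/
def lacH (k : ℕ → ℕ) (r : ℕ) : ℕ := k (r + 1) - k r

/-- The blocks `I_r = (k_r, k_{r+1}]` of a lacunary sequence. -/
def lacI (k : ℕ → ℕ) (r : ℕ) : Finset ℕ := Finset.Ioc (k r) (k (r + 1))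

/-- `φ_θ(ε) = limsup_t f(h_t ε)/f(h_t)`. -/
noncomputable def modPhiTheta (f : ℝ → ℝ) (k : ℕ → ℕ) (ε : ℝ) : ℝ :=
  Filter.limsup (fun t : ℕ => f ((lacH k t : ℝ) * ε) / f ((lacH k t : ℝ))) Filter.atTop

/-- `f` is `θ`-compatible if `φ_θ(ε) → 0` as `ε → 0⁺`. -/
def ThetaCompatible (f : ℝ → ℝ) (k : ℕ → ℕ) : Prop :=
  Filter.Tendsto (modPhiTheta f k) (nhdsWithin 0 (Set.Ioi 0)) (nhds 0)

/-- Wijsman `θ`-lacunary statistical convergence. -/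
def WijsmanLacStatConv {X : Type*} [MetricSpace X] (k : ℕ → ℕ) (A : ℕ → Set X)
    (B : Set X) : Prop :=
  ∀ x : X, ∀ ε > (0:ℝ),
    Filter.Tendsto (fun r : ℕ =>
      (((lacI k r).filter
        (fun j => ε < |infDist x (A j) - infDist x B|)).card : ℝ) / (lacH k r : ℝ))
      Filter.atTop (nhds 0)

/-- Wijsman `θ`-lacunary `f`-statistical convergence. -/
def WijsmanLacFStatConv {X : Type*} [MetricSpace X] (f : ℝ → ℝ) (k : ℕ → ℕ)
    (A : ℕ → Set X) (B : Set X) : Prop :=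
  ∀ x : X, ∀ ε > (0:ℝ),
    Filter.Tendsto (fun r : ℕ =>
      f ((((lacI k r).filter
        (fun j => ε < |infDist x (A j) - infDist x B|)).card : ℝ)) / f ((lacH k r : ℝ)))
      Filter.atTop (nhds 0)

/-- Wijsman `θ`-lacunary `f`-strong Cesàro convergence. -/
def WijsmanLacFStrongCesaro {X : Type*} [MetricSpace X] (f : ℝ → ℝ) (k : ℕ → ℕ)
    (A : ℕ → Set X) (B : Set X) : Prop :=
  ∀ x : X,
    Filter.Tendsto (fun r : ℕ =>
      f (∑ j ∈ lacI k r, |infDist x (A j) - infDist x B|) / f ((lacH k r : ℝ)))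
      Filter.atTop (nhds 0)

/-- Wijsman `θ`-lacunary strong Cesàro convergence (the case `f = id`). -/
def WijsmanLacStrongCesaro {X : Type*} [MetricSpace X] (k : ℕ → ℕ)
    (A : ℕ → Set X) (B : Set X) : Prop :=
  ∀ x : X,
    Filter.Tendsto (fun r : ℕ =>
      (∑ j ∈ lacI k r, |infDist x (A j) - infDist x B|) / (lacH k r : ℝ))
      Filter.atTop (nhds 0)

/-- A real sequence is `θ`-lacunary uniformly integrable. -/
def LacUnifIntegrable (k : ℕ → ℕ) (x : ℕ → ℝ) : Prop :=
  Filter.Tendsto (fun M : ℝ =>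
    ⨆ t : ℕ, (∑ j ∈ lacI k t, if M ≤ |x j| then |x j| else 0) / (lacH k t : ℝ))
    Filter.atTop (nhds 0)

/-- Wijsman `θ`-lacunary uniform integrability. -/
def WijsmanLacUnifIntegrable {X : Type*} [MetricSpace X] (k : ℕ → ℕ)
    (A : ℕ → Set X) : Prop :=
  ∀ x : X, LacUnifIntegrable k (fun j => infDist x (A j))


theorem wijsman_lac_fcesaro_imp_lac_cesaro {X : Type*} [MetricSpace X]
    (k : ℕ → ℕ) (hk : IsLacunary k) (f : ℝ → ℝ) (hf : IsModulus f)
    (A : ℕ → Set X) (B : Set X)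
    (hA : ∀ n, (A n).Nonempty ∧ IsClosed (A n)) (hB : B.Nonempty ∧ IsClosed B)
    (h : WijsmanLacFStrongCesaro f k A B) : WijsmanLacStrongCesaro k A B := by
  obtain ⟨hpos, hzero, hsub, hmono, _, _⟩ := hf
  have hf0 : f 0 = 0 := (hzero 0 Set.self_mem_Ici).mpr rfl
  have hmul : ∀ (n : ℕ) (y : ℝ), 0 ≤ y → f ((n : ℝ) * y) ≤ (n : ℝ) * f y := by
    intro n y hy
    induction n with
    | zero => simp [hf0]
    | succ m ih =>
      have h1 : ((m : ℝ) + 1) * y = (m : ℝ) * y + y := by ring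
      push_cast
      rw [h1]
      have := hsub ((m : ℝ) * y) (Set.mem_Ici.mpr (by positivity)) y (Set.mem_Ici.mpr hy)
      nlinarith
  intro x
  have hx := h x
  set S := fun r => ∑ j ∈ lacI k r, |infDist x (A j) - infDist x B| with hSdef
  have hS0 : ∀ r, 0 ≤ S r := fun r => Finset.sum_nonneg (fun j _ => abs_nonneg _)
  have hh : ∀ r, 1 ≤ lacH k r := by
    intro r
    have : k r < k (r + 1) := hk.2.1 (by omega)
    unfold lacH; omega
  have hh0 : ∀ r, (0:ℝ) < (lacH k r : ℝ) := by
    intro r; exact_mod_cast Nat.lt_of_lt_of_le Nat.zero_lt_one (hh r)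
  have hfh : ∀ r, 0 < f ((lacH k r : ℝ)) := by
    intro r
    have hge := hpos (lacH k r : ℝ) (Set.mem_Ici.mpr (le_of_lt (hh0 r)))
    rcases lt_or_eq_of_le hge with hlt | heq
    · exact hlt
    · exact absurd ((hzero _ (Set.mem_Ici.mpr (le_of_lt (hh0 r)))).mp heq.symm) (ne_of_gt (hh0 r))
  rw [NormedAddCommGroup.tendsto_nhds_zero] at hx ⊢
  intro ε hε
  obtain ⟨n, hn⟩ := exists_nat_gt (1 / ε)
  have hn0 : (0:ℝ) < n := lt_trans (by positivity) hn
  have hεn : 1 / (n : ℝ) < ε := by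
    rw [div_lt_iff₀ hn0]
    rw [div_lt_iff₀ hε] at hn
    nlinarith
  filter_upwards [hx (1 / (2 * n)) (by positivity)] with r hr
  rw [Real.norm_eq_abs, abs_of_nonneg (div_nonneg (hS0 r) (le_of_lt (hh0 r)))]
  by_contra hcon
  push_neg at hcon
  -- S r / h r ≥ ε, hence S r ≥ h r / n
  have hSge : (lacH k r : ℝ) / n ≤ S r := by
    rw [le_div_iff₀ (hh0 r)] at hcon
    have : (lacH k r : ℝ) / n ≤ ε * (lacH k r : ℝ) := by
      have h1n : (1:ℝ) < ε * n := by
        rw [div_lt_iff₀ hn0] at hεn; linarith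
      rw [div_le_iff₀ hn0]
      nlinarith [hh0 r, h1n]
    linarith
  have h1 : f ((lacH k r : ℝ)) ≤ (n : ℝ) * f ((lacH k r : ℝ) / n) := by
    have : (n : ℝ) * ((lacH k r : ℝ) / n) = (lacH k r : ℝ) := by
      field_simp
    calc f ((lacH k r : ℝ)) = f ((n : ℝ) * ((lacH k r : ℝ) / n)) := by rw [this]
    _ ≤ (n : ℝ) * f ((lacH k r : ℝ) / n) := hmul n _ (div_nonneg (le_of_lt (hh0 r)) (le_of_lt hn0))
  have h2 : f ((lacH k r : ℝ) / n) ≤ f (S r) :=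
    hmono (Set.mem_Ici.mpr (by positivity)) (Set.mem_Ici.mpr (hS0 r)) hSge
  have h3 : 1 / (2 * (n : ℝ)) ≤ f (S r) / f ((lacH k r : ℝ)) := by
    rw [div_le_div_iff₀ (by positivity) (hfh r)]
    nlinarith [hfh r, hpos ((lacH k r : ℝ) / n) (Set.mem_Ici.mpr (by positivity))]
  rw [Real.norm_eq_abs, abs_of_nonneg (div_nonneg (hpos _ (Set.mem_Ici.mpr (hS0 r))) (le_of_lt (hfh r)))] at hr
  linarith
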